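/- Let X be a long space (a Hausdorff space in which every σ-compact subset has compact closure) and let M be a metrizable topological group with a compatible metric ρ. Let C_cpt(X, M) be the group, under pointwise operations, of continuous maps f : X → M with compact support, equipped with the topology of the sup-metric d(f, g) = sup_{x ∈ X} ρ(f(x), g(x)); for each compact K ⊆ X let C_K(X, M) be the subgroup of maps with support contained in K, with the subspace (uniform) topology. Then the sup-metric topology on C_cpt(X, M) coincides with the colimit space topology, i.e. the finest topology making each inclusion C_K(X, M) → C_cpt(X, M) continuous; in particular this colimit space topology is a group topology, so the family {C_K(X, M)}_{K compact} satisfies ACP. -/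

import Mathlib

open TopologicalSpace Topology

/-- The topology underlying a metric space structure. -/
def metricTopology {Y : Type*} (m : MetricSpace Y) : TopologicalSpace Y :=
  m.toPseudoMetricSpace.toUniformSpace.toTopologicalSpace

variable (X : Type*) [TopologicalSpace X] [T2Space X]
variable (M : Type*) [MetricSpace M] [Group M] [IsTopologicalGroup M]

/-- The group (under pointwise operations) of continuous compactly supported `M`-valued maps
on `X`; the support of `f` is the closure of `{x | f x ≠ 1}`. -/
def Ccpt : Subgroup (X → M) where
  carrier := {f | Continuous f ∧ IsCompact (closure {x | f x ≠ 1})}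
  one_mem' := by
    refine ⟨continuous_const, ?_⟩
    have : {x : X | (1 : X → M) x ≠ 1} = ∅ := by ext x; simp
    rw [this, closure_empty]
    exact isCompact_empty
  mul_mem' := by
    rintro f g ⟨hfc, hfk⟩ ⟨hgc, hgk⟩
    refine ⟨hfc.mul hgc, ?_⟩
    refine (hfk.union hgk).of_isClosed_subset isClosed_closure ?_
    rw [← closure_union]
    refine closure_mono fun x hx => ?_
    by_contra hc
    simp only [Set.mem_union, Set.mem_setOf_eq, not_or, not_not] at hc
    exact hx (by simp [Pi.mul_apply, hc.1, hc.2])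
  inv_mem' := by
    rintro f ⟨hfc, hfk⟩
    refine ⟨hfc.inv, ?_⟩
    have : {x : X | f⁻¹ x ≠ 1} = {x | f x ≠ 1} := by
      ext x; simp [Pi.inv_apply, inv_eq_one]
    rw [this]
    exact hfk

variable {X M}

lemma ccpt_cont (f : Ccpt X M) : Continuous (f : X → M) := f.2.1
lemma ccpt_cpt (f : Ccpt X M) : IsCompact (closure {x | (f : X → M) x ≠ 1}) := f.2.2

lemma ccpt_eq_one {f : Ccpt X M} {x : X}
    (hx : x ∉ closure {y | (f : X → M) y ≠ 1}) : (f : X → M) x = 1 := by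
  by_contra h; exact hx (subset_closure h)

lemma ccpt_bdd (f g : Ccpt X M) :
    BddAbove (Set.range fun x : X => dist ((f : X → M) x) ((g : X → M) x)) := by
  have hK : IsCompact (closure {x | (f : X → M) x ≠ 1} ∪ closure {x | (g : X → M) x ≠ 1}) :=
    (ccpt_cpt f).union (ccpt_cpt g)
  have hcont : Continuous fun x : X => dist ((f : X → M) x) ((g : X → M) x) :=
    (ccpt_cont f).dist (ccpt_cont g)
  have himg : BddAbove ((fun x : X => dist ((f : X → M) x) ((g : X → M) x)) ''
      (closure {x | (f : X → M) x ≠ 1} ∪ closure {x | (g : X → M) x ≠ 1})) :=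
    (hK.image hcont).bddAbove
  refine (himg.insert 0).mono ?_
  rintro r ⟨x, rfl⟩
  by_cases hx : x ∈ closure {x | (f : X → M) x ≠ 1} ∪ closure {x | (g : X → M) x ≠ 1}
  · exact Set.mem_insert_of_mem _ ⟨x, hx, rfl⟩
  · have h1 : (f : X → M) x = 1 := ccpt_eq_one fun h => hx (Or.inl h)
    have h2 : (g : X → M) x = 1 := ccpt_eq_one fun h => hx (Or.inr h)
    simp [h1, h2]

noncomputable def ccptMS : MetricSpace (Ccpt X M) where
  dist f g := sSup (Set.range fun x : X => dist ((f : X → M) x) ((g : X → M) x))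
  dist_self f := le_antisymm
    (Real.sSup_le (by rintro r ⟨x, rfl⟩; simp) le_rfl)
    (Real.sSup_nonneg (by rintro r ⟨x, rfl⟩; exact dist_nonneg))
  dist_comm f g := by simp only [dist_comm]
  dist_triangle f g h := by
    refine Real.sSup_le ?_ (add_nonneg (Real.sSup_nonneg (by rintro r ⟨x, rfl⟩; exact dist_nonneg))
      (Real.sSup_nonneg (by rintro r ⟨x, rfl⟩; exact dist_nonneg)))
    rintro r ⟨x, rfl⟩
    calc dist ((f : X → M) x) ((h : X → M) x)
        ≤ dist ((f : X → M) x) ((g : X → M) x) + dist ((g : X → M) x) ((h : X → M) x) :=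
          dist_triangle _ _ _
      _ ≤ _ := add_le_add (le_csSup (ccpt_bdd f g) ⟨x, rfl⟩) (le_csSup (ccpt_bdd g h) ⟨x, rfl⟩)
  eq_of_dist_eq_zero := by
    intro f g h0
    refine Subtype.ext (funext fun x => ?_)
    have hle : dist ((f : X → M) x) ((g : X → M) x) ≤ 0 :=
      h0 ▸ le_csSup (ccpt_bdd f g) ⟨x, rfl⟩
    exact dist_le_zero.mp hle

/-- Let `X` be a long space (every σ-compact subset has compact closure) and
`M` a metrizable topological group with compatible metric `dist`.  Then the sup-metric
`d(f,g) = sup_x dist (f x) (g x)` is a metric on `C_cpt(X, M)`, and its topology coincides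
with the colimit space topology of the subgroups `C_K(X, M)` of maps supported in a compact
set `K` (each carrying the subspace (uniform) topology), i.e. the finest topology making all
inclusions continuous; in particular this colimit space topology is a group topology, so the
family `{C_K(X, M)}_K` satisfies ACP. -/
theorem ccpt_colimit_of_long
    (hlong : ∀ A : Set X,
      (∃ K : ℕ → Set X, (∀ n, IsCompact (K n)) ∧ A = ⋃ n, K n) → IsCompact (closure A)) :
    ∃ dm : MetricSpace (Ccpt X M),
      (∀ f g : Ccpt X M, @dist _ dm.toPseudoMetricSpace.toDist f g
          = sSup (Set.range fun x : X => dist ((f : X → M) x) ((g : X → M) x))) ∧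
      ∀ T : TopologicalSpace (Ccpt X M),
        T = (⨆ (K : Set X) (_ : IsCompact K),
            TopologicalSpace.coinduced
              (Subtype.val :
                {f : Ccpt X M // closure {x | (f : X → M) x ≠ 1} ⊆ K} → Ccpt X M)
              (TopologicalSpace.induced Subtype.val (metricTopology dm))) →
          metricTopology dm = T ∧ @IsTopologicalGroup (Ccpt X M) T _ := by
  classical
  refine ⟨ccptMS, fun f g => rfl, ?_⟩
  intro T hT
  subst hT
  have key : metricTopology (ccptMS : MetricSpace (Ccpt X M)) =
      (⨆ (K : Set X) (_ : IsCompact K),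
        TopologicalSpace.coinduced
          (Subtype.val :
            {f : Ccpt X M // closure {x | (f : X → M) x ≠ 1} ⊆ K} → Ccpt X M)
          (TopologicalSpace.induced Subtype.val (metricTopology ccptMS))) := by
    refine le_antisymm ?_ (iSup_le fun K => iSup_le fun hK => ?_)
    · -- hard direction: every colimit-open set is metric-open
      rw [← isOpen_implies_isOpen_iff]
      intro U hU
      have hUK : ∀ K : Set X, IsCompact K →
          IsOpen[TopologicalSpace.coinduced
            (Subtype.val :
              {f : Ccpt X M // closure {x | (f : X → M) x ≠ 1} ⊆ K} → Ccpt X M)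
            (TopologicalSpace.induced Subtype.val (metricTopology ccptMS))] U :=
        fun K hK => hU.mono (le_iSup₂ (f := fun (K : Set X) (_ : IsCompact K) =>
          TopologicalSpace.coinduced
            (Subtype.val :
              {f : Ccpt X M // closure {x | (f : X → M) x ≠ 1} ⊆ K} → Ccpt X M)
            (TopologicalSpace.induced Subtype.val (metricTopology ccptMS))) K hK)
      letI : MetricSpace (Ccpt X M) := ccptMS
      refine Metric.isOpen_iff.mpr ?_
      intro f hf
      by_contra hc
      push_neg at hc
      have H : ∀ n : ℕ, ∃ g : Ccpt X M, dist g f < 1 / (n + 1 : ℝ) ∧ g ∉ U := by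
        intro n
        rcases Set.not_subset.mp (hc (1 / (n + 1 : ℝ)) (by positivity)) with ⟨g, hg1, hg2⟩
        exact ⟨g, Metric.mem_ball.mp hg1, hg2⟩
      choose g hg1 hg2 using H
      set A : Set X := ⋃ n : ℕ,
        (closure {x | (f : X → M) x ≠ 1} ∪ closure {x | ((g n : Ccpt X M) : X → M) x ≠ 1}) with hA
      have hKc : IsCompact (closure A) :=
        hlong A ⟨_, fun n => (ccpt_cpt f).union (ccpt_cpt (g n)), rfl⟩
      have hsubf : closure {x | (f : X → M) x ≠ 1} ⊆ closure A := by
        refine Set.Subset.trans ?_ subset_closure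
        intro x hx
        exact Set.mem_iUnion.mpr ⟨0, Or.inl hx⟩
      have hsubg : ∀ n, closure {x | ((g n : Ccpt X M) : X → M) x ≠ 1} ⊆ closure A := by
        intro n
        refine Set.Subset.trans ?_ subset_closure
        intro x hx
        exact Set.mem_iUnion.mpr ⟨n, Or.inr hx⟩
      have hopen := hUK (closure A) hKc
      rw [isOpen_coinduced, isOpen_induced_iff (t := metricTopology (ccptMS : MetricSpace (Ccpt X M)))] at hopen
      obtain ⟨V, hVopen, hVU⟩ := hopen
      have hfV : f ∈ V := by
        have hmem : (⟨f, hsubf⟩ :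
            {h : Ccpt X M // closure {x | (h : X → M) x ≠ 1} ⊆ closure A}) ∈
            Subtype.val ⁻¹' U := hf
        rw [← hVU] at hmem
        exact hmem
      rcases Metric.isOpen_iff.mp hVopen f hfV with ⟨ε, hε, hball⟩
      obtain ⟨n, hn⟩ := exists_nat_one_div_lt hε
      have hgV : g n ∈ V := hball (Metric.mem_ball.mpr ((hg1 n).trans hn))
      have hmem2 : (⟨g n, hsubg n⟩ :
          {h : Ccpt X M // closure {x | (h : X → M) x ≠ 1} ⊆ closure A}) ∈
          Subtype.val ⁻¹' V := hgV
      rw [hVU] at hmem2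
      exact hg2 n hmem2
    · -- easy direction
      rw [← isOpen_implies_isOpen_iff]
      intro U hU
      rw [isOpen_coinduced]
      exact (isOpen_induced_iff (t := metricTopology (ccptMS : MetricSpace (Ccpt X M)))).mpr ⟨U, hU, rfl⟩
  refine ⟨key, ?_⟩
  rw [← key]
  letI : MetricSpace (Ccpt X M) := (ccptMS : MetricSpace (Ccpt X M))
  letI : TopologicalSpace (Ccpt X M) := metricTopology (ccptMS : MetricSpace (Ccpt X M))
  show IsTopologicalGroup (Ccpt X M)
  have cmul : Continuous fun p : Ccpt X M × Ccpt X M => p.1 * p.2 := by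
    refine Metric.continuous_iff.mpr ?_
    rintro ⟨f, g⟩ ε hε
    have hsc : IsCompact ((insert (1 : M) ((f : X → M) '' closure {x | (f : X → M) x ≠ 1})) ×ˢ
        (insert (1 : M) ((g : X → M) '' closure {x | (g : X → M) x ≠ 1}))) :=
      (((ccpt_cpt f).image (ccpt_cont f)).insert 1).prod
        (((ccpt_cpt g).image (ccpt_cont g)).insert 1)
    have hu := hsc.uniformContinuousAt_of_continuousAt (fun p : M × M => p.1 * p.2)
      (fun a _ => continuous_mul.continuousAt) (Metric.dist_mem_uniformity (half_pos hε))
    rw [Metric.mem_uniformity_dist] at hu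
    obtain ⟨δ, hδpos, hδ⟩ := hu
    refine ⟨δ, hδpos, ?_⟩
    rintro ⟨f', g'⟩ hd
    rw [Prod.dist_eq] at hd
    show dist (f' * g') (f * g) < ε
    have hkey : ∀ x : X,
        dist (((f' * g' : Ccpt X M) : X → M) x) (((f * g : Ccpt X M) : X → M) x) ≤ ε / 2 := by
      intro x
      have hmf : (f : X → M) x ∈ insert (1 : M)
          ((f : X → M) '' closure {x | (f : X → M) x ≠ 1}) := by
        by_cases hx : x ∈ closure {x | (f : X → M) x ≠ 1}
        · exact Set.mem_insert_of_mem _ ⟨x, hx, rfl⟩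
        · rw [ccpt_eq_one hx]; exact Set.mem_insert _ _
      have hmg : (g : X → M) x ∈ insert (1 : M)
          ((g : X → M) '' closure {x | (g : X → M) x ≠ 1}) := by
        by_cases hx : x ∈ closure {x | (g : X → M) x ≠ 1}
        · exact Set.mem_insert_of_mem _ ⟨x, hx, rfl⟩
        · rw [ccpt_eq_one hx]; exact Set.mem_insert _ _
      have h1 : dist ((f : X → M) x) ((f' : X → M) x) ≤ dist f' f := by
        rw [dist_comm]
        exact le_csSup (ccpt_bdd f' f) ⟨x, rfl⟩
      have h2 : dist ((g : X → M) x) ((g' : X → M) x) ≤ dist g' g := by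
        rw [dist_comm]
        exact le_csSup (ccpt_bdd g' g) ⟨x, rfl⟩
      have hdx : dist (((f : X → M) x, (g : X → M) x) : M × M)
          (((f' : X → M) x, (g' : X → M) x) : M × M) < δ := by
        rw [Prod.dist_eq]
        exact max_lt (h1.trans_lt ((le_max_left _ _).trans_lt hd))
          (h2.trans_lt ((le_max_right _ _).trans_lt hd))
      have hlt := hδ hdx ⟨hmf, hmg⟩
      show dist ((f' : X → M) x * (g' : X → M) x) ((f : X → M) x * (g : X → M) x) ≤ ε / 2
      rw [dist_comm]
      exact le_of_lt hlt
    have hle : dist (f' * g') (f * g) ≤ ε / 2 :=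
      Real.sSup_le (by rintro r ⟨x, rfl⟩; exact hkey x) (half_pos hε).le
    exact lt_of_le_of_lt hle (half_lt_self hε)
  have cinv : Continuous fun p : Ccpt X M => p⁻¹ := by
    refine Metric.continuous_iff.mpr ?_
    intro f ε hε
    have hsc : IsCompact (insert (1 : M) ((f : X → M) '' closure {x | (f : X → M) x ≠ 1})) :=
      ((ccpt_cpt f).image (ccpt_cont f)).insert 1
    have hu := hsc.uniformContinuousAt_of_continuousAt (fun a : M => a⁻¹)
      (fun a _ => continuous_inv.continuousAt) (Metric.dist_mem_uniformity (half_pos hε))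
    rw [Metric.mem_uniformity_dist] at hu
    obtain ⟨δ, hδpos, hδ⟩ := hu
    refine ⟨δ, hδpos, ?_⟩
    intro f' hd
    show dist f'⁻¹ f⁻¹ < ε
    have hkey : ∀ x : X,
        dist (((f'⁻¹ : Ccpt X M) : X → M) x) (((f⁻¹ : Ccpt X M) : X → M) x) ≤ ε / 2 := by
      intro x
      have hmf : (f : X → M) x ∈ insert (1 : M)
          ((f : X → M) '' closure {x | (f : X → M) x ≠ 1}) := by
        by_cases hx : x ∈ closure {x | (f : X → M) x ≠ 1}
        · exact Set.mem_insert_of_mem _ ⟨x, hx, rfl⟩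
        · rw [ccpt_eq_one hx]; exact Set.mem_insert _ _
      have h1 : dist ((f : X → M) x) ((f' : X → M) x) ≤ dist f' f := by
        rw [dist_comm]
        exact le_csSup (ccpt_bdd f' f) ⟨x, rfl⟩
      have hlt := hδ (h1.trans_lt hd) hmf
      show dist (((f' : X → M) x)⁻¹) (((f : X → M) x)⁻¹) ≤ ε / 2
      rw [dist_comm]
      exact le_of_lt hlt
    have hle : dist f'⁻¹ f⁻¹ ≤ ε / 2 :=
      Real.sSup_le (by rintro r ⟨x, rfl⟩; exact hkey x) (half_pos hε).le
    exact lt_of_le_of_lt hle (half_lt_self hε)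
  exact { continuous_mul := cmul, continuous_inv := cinv }
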